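/- Under the grounded Laplacian setup with n ≥ 2, let 0 < ε < 1/2, let t be a positive integer, and let 0 < δ < (ε/(72n²))·√(6(1−ε/12)/((1+ε/12)(n²−1))). Let X and Y be real matrices with columns indexed by F such that ‖X e_i‖² + ‖Y e_i‖² = e_iᵀ L_F^{-1} e_i for every i ∈ F, and let X', Y', X̃, Ỹ be real t×|F| matrices satisfying: (i) (1−ε/12)‖X e_i‖² ≤ ‖X' e_i‖² ≤ (1+ε/12)‖X e_i‖² and (1−ε/12)‖Y e_i‖² ≤ ‖Y' e_i‖² ≤ (1+ε/12)‖Y e_i‖² for every i ∈ F; and (ii) ‖X'_{[j,:]} − X̃_{[j,:]}‖_{L_F} ≤ δ‖X'_{[j,:]}‖_{L_F} and ‖Y'_{[j,:]} − Ỹ_{[j,:]}‖_{L_F} ≤ δ‖Y'_{[j,:]}‖_{L_F} for every row index 1 ≤ j ≤ t. Then for every i ∈ F: (1 − ε/3)·e_iᵀ L_F^{-1} e_i ≤ ‖X̃ e_i‖² + ‖Ỹ e_i‖² ≤ (1 + ε/3)·e_iᵀ L_F^{-1} e_i. -/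

import Mathlib

open Matrix Finset

section Helpers


lemma amgm (τ u v : ℝ) (hτ : 0 < τ) : 2*(u*v) ≤ τ*u^2 + v^2/τ := by
  have h2 : 0 ≤ (τ*u - v)^2 / τ := by positivity
  have h3 : (τ*u - v)^2 / τ = τ*u^2 + v^2/τ - 2*(u*v) := by
    field_simp
    ring
  linarith [h3 ▸ h2]

lemma step_ineq (a b s S' L : ℝ) (hL : 0 ≤ L) (hs : a^2 ≤ s) (hS' : 0 ≤ S')
    (hb : b^2 ≤ L * S') : (a + b)^2 ≤ (L + 1) * (s + S') := by
  rcases eq_or_lt_of_le hL with h0 | h0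
  · have hb2 : b^2 ≤ 0 := by rw [← h0] at hb; simpa using hb
    have hb0 : b = 0 := by
      have h4 : b^2 = 0 := le_antisymm hb2 (sq_nonneg b)
      exact pow_eq_zero_iff two_ne_zero |>.mp h4
    subst hb0
    simp only [add_zero]
    nlinarith
  · nlinarith [sq_nonneg (L*a - b), mul_le_mul_of_nonneg_left hs (le_of_lt (mul_pos h0 (by linarith : (0:ℝ) < L+1))),
      mul_le_mul_of_nonneg_left hb (by linarith : (0:ℝ) ≤ L+1)]

lemma psd_cs {m : Type*} [Fintype m] {M : Matrix m m ℝ} (hM : M.PosSemidef) (x y : m → ℝ) :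
    (x ⬝ᵥ (M *ᵥ y))^2 ≤ (x ⬝ᵥ (M *ᵥ x)) * (y ⬝ᵥ (M *ᵥ y)) := by
  have hsym : ∀ u v : m → ℝ, u ⬝ᵥ (M *ᵥ v) = v ⬝ᵥ (M *ᵥ u) := by
    intro u v
    simp only [dotProduct, mulVec, Finset.mul_sum]
    rw [Finset.sum_comm]
    apply Finset.sum_congr rfl; intro i _
    apply Finset.sum_congr rfl; intro j _
    have h := hM.1.apply i j
    simp only [star_trivial] at h
    rw [← h]; ring
  have hquad : ∀ s : ℝ, 0 ≤ (y ⬝ᵥ (M *ᵥ y)) * (s*s) + (2 * (x ⬝ᵥ (M *ᵥ y))) * s + (x ⬝ᵥ (M *ᵥ x)) := by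
    intro s
    have h := hM.dotProduct_mulVec_nonneg (x + s • y)
    simp only [star_trivial] at h
    have hexp : (x + s • y) ⬝ᵥ (M *ᵥ (x + s • y))
        = (y ⬝ᵥ (M *ᵥ y)) * (s*s) + (2 * (x ⬝ᵥ (M *ᵥ y))) * s + (x ⬝ᵥ (M *ᵥ x)) := by
      rw [mulVec_add, dotProduct_add, add_dotProduct, add_dotProduct,
        mulVec_smul, dotProduct_smul, smul_dotProduct, smul_dotProduct,
        dotProduct_smul, hsym y x]
      simp only [smul_eq_mul]
      ring
    rw [hexp] at h
    exact h
  have hd := discrim_le_zero hquad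
  rw [discrim] at hd
  nlinarith [hd]

lemma sym_dot {m : Type*} [Fintype m] {M : Matrix m m ℝ} (hM : M.IsHermitian) (u v : m → ℝ) :
    u ⬝ᵥ (M *ᵥ v) = v ⬝ᵥ (M *ᵥ u) := by
  simp only [dotProduct, mulVec, Finset.mul_sum]
  rw [Finset.sum_comm]
  apply Finset.sum_congr rfl; intro i _
  apply Finset.sum_congr rfl; intro j _
  have h := hM.apply i j
  simp only [star_trivial] at h
  rw [← h]; ring

variable {V : Type} [Fintype V] [DecidableEq V]
lemma telescope {G : SimpleGraph V} (x : V → ℝ) {u v : V} (p : G.Walk u v) :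
    (x u - x v)^2 ≤ (p.length : ℝ) *
      (p.darts.map (fun d => (x d.toProd.1 - x d.toProd.2)^2)).sum := by
  induction p with
  | nil => simp
  | cons h p ih =>
    rename_i a b c
    simp only [SimpleGraph.Walk.darts_cons, List.map_cons, List.sum_cons,
      SimpleGraph.Walk.length_cons]
    have hS' : 0 ≤ (p.darts.map (fun d => (x d.toProd.1 - x d.toProd.2)^2)).sum := by
      apply List.sum_nonneg
      intro r hr
      simp only [List.mem_map] at hr
      obtain ⟨d, _, rfl⟩ := hr
      positivity
    have hxy : x a - x c = (x a - x b) + (x b - x c) := by ring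
    rw [hxy]
    push_cast
    exact step_ineq _ _ _ _ _ (by positivity) le_rfl hS' ih

lemma darts_sum_le_DS {G : SimpleGraph V} [DecidableRel G.Adj] (x : V → ℝ) {u v : V}
    {p : G.Walk u v} (hp : p.IsPath) :
    (p.darts.map (fun d => (x d.toProd.1 - x d.toProd.2)^2)).sum
      ≤ ∑ a : V, ∑ b : V, if G.Adj a b then (x a - x b)^2 else 0 := by
  have hnd : p.darts.Nodup := by
    have := hp.isTrail.edges_nodup
    rw [SimpleGraph.Walk.edges] at this
    exact this.of_map _
  rw [← List.sum_toFinset _ hnd]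
  have hsub : p.darts.toFinset ⊆ (Finset.univ : Finset G.Dart) := Finset.subset_univ _
  have h1 : ∑ d ∈ p.darts.toFinset, (x d.toProd.1 - x d.toProd.2)^2
      ≤ ∑ d : G.Dart, (x d.toProd.1 - x d.toProd.2)^2 := by
    apply Finset.sum_le_sum_of_subset_of_nonneg hsub
    intro d _ _; positivity
  refine h1.trans ?_
  -- sum over darts ≤ double sum
  have h2 : ∑ d : G.Dart, (x d.toProd.1 - x d.toProd.2)^2
      = ∑ q ∈ (Finset.univ : Finset G.Dart).image SimpleGraph.Dart.toProd,
          (x q.1 - x q.2)^2 := by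
    rw [Finset.sum_image]
    intro d _ e _ h
    exact SimpleGraph.Dart.toProd_injective h
  rw [h2]
  have h3 : ∑ q ∈ (Finset.univ : Finset G.Dart).image SimpleGraph.Dart.toProd,
          (x q.1 - x q.2)^2
      = ∑ q ∈ (Finset.univ : Finset G.Dart).image SimpleGraph.Dart.toProd,
          (if G.Adj q.1 q.2 then (x q.1 - x q.2)^2 else 0) := by
    apply Finset.sum_congr rfl
    intro q hq
    simp only [Finset.mem_image] at hq
    obtain ⟨d, _, rfl⟩ := hq
    rw [if_pos d.adj]
  rw [h3, ← Finset.sum_product']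
  apply Finset.sum_le_sum_of_subset_of_nonneg
  · intro q _; simp
  · intro q _ _
    split <;> positivity
lemma sum_ext (F : Finset V) (g : V → ℝ) (hg : ∀ v, v ∉ F → g v = 0) :
    ∑ v : V, g v = ∑ a : F, g ↑a := by
  rw [Finset.sum_coe_sort F g]
  exact (Finset.sum_subset (Finset.subset_univ F) (fun v _ hv => hg v hv)).symm

lemma quad_eq {G : SimpleGraph V} [DecidableRel G.Adj] (F : Finset V) (x : F → ℝ) :
    x ⬝ᵥ ((G.lapMatrix ℝ).submatrix (fun i : F => (i : V)) (fun i : F => (i : V)) *ᵥ x)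
      = (fun v => if h : v ∈ F then x ⟨v, h⟩ else 0) ⬝ᵥ
          (G.lapMatrix ℝ *ᵥ (fun v => if h : v ∈ F then x ⟨v, h⟩ else 0)) := by
  set xb : V → ℝ := fun v => if h : v ∈ F then x ⟨v, h⟩ else 0 with hxb
  have hxbF : ∀ a : F, xb ↑a = x a := by
    intro a
    simp only [hxb, dif_pos a.2]
  have hxb0 : ∀ v, v ∉ F → xb v = 0 := by
    intro v hv; simp only [hxb, dif_neg hv]
  have hinner : ∀ v : V, (G.lapMatrix ℝ *ᵥ xb) v = ∑ b : F, G.lapMatrix ℝ v ↑b * x b := by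
    intro v
    simp only [mulVec, dotProduct]
    rw [sum_ext F (fun w => G.lapMatrix ℝ v w * xb w)
      (fun w hw => by simp only [hxb0 w hw, mul_zero])]
    exact Finset.sum_congr rfl fun b _ => by rw [hxbF]
  simp only [dotProduct]
  rw [sum_ext F (fun v => xb v * (G.lapMatrix ℝ *ᵥ xb) v)
    (fun v hv => by simp only [hxb0 v hv, zero_mul])]
  apply Finset.sum_congr rfl
  intro a _
  rw [hxbF, hinner]
  simp only [mulVec, dotProduct, submatrix_apply]
lemma quad_DS (G : SimpleGraph V) [DecidableRel G.Adj] (y : V → ℝ) :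
    y ⬝ᵥ (G.lapMatrix ℝ *ᵥ y)
      = (∑ a : V, ∑ b : V, if G.Adj a b then (y a - y b)^2 else 0) / 2 := by
  rw [← Matrix.toLinearMap₂'_apply', SimpleGraph.lapMatrix_toLinearMap₂']

lemma DS_le (G : SimpleGraph V) [DecidableRel G.Adj] (y : V → ℝ) :
    (∑ a : V, ∑ b : V, if G.Adj a b then (y a - y b)^2 else 0)
      ≤ 4 * (Fintype.card V : ℝ) * ∑ v : V, y v ^ 2 := by
  have hdeg : ∀ a : V, (G.degree a : ℝ) ≤ (Fintype.card V : ℝ) := by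
    intro a
    exact_mod_cast (G.degree_lt_card_verts a).le
  have h1 : ∀ a : V, ∑ b : V, (if G.Adj a b then (2:ℝ) * y a ^ 2 else 0)
      = 2 * y a ^ 2 * (G.degree a : ℝ) := by
    intro a
    rw [SimpleGraph.degree_eq_sum_if_adj, Finset.mul_sum]
    apply Finset.sum_congr rfl
    intro b _
    split <;> simp
  calc (∑ a : V, ∑ b : V, if G.Adj a b then (y a - y b)^2 else 0)
      ≤ ∑ a : V, ∑ b : V, ((if G.Adj a b then (2:ℝ)*y a^2 else 0)
        + (if G.Adj a b then (2:ℝ)*y b^2 else 0)) := by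
        apply Finset.sum_le_sum; intro a _
        apply Finset.sum_le_sum; intro b _
        split
        · nlinarith [sq_nonneg (y a + y b)]
        · simp
    _ = (∑ a : V, ∑ b : V, (if G.Adj a b then (2:ℝ)*y a^2 else 0))
        + ∑ a : V, ∑ b : V, (if G.Adj a b then (2:ℝ)*y b^2 else 0) := by
        rw [← Finset.sum_add_distrib]
        apply Finset.sum_congr rfl
        intro a _
        rw [← Finset.sum_add_distrib]
    _ ≤ 4 * (Fintype.card V : ℝ) * ∑ v : V, y v ^ 2 := by
        have hA : (∑ a : V, ∑ b : V, (if G.Adj a b then (2:ℝ)*y a^2 else 0))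
            ≤ 2 * (Fintype.card V : ℝ) * ∑ v : V, y v ^ 2 := by
          calc (∑ a : V, ∑ b : V, (if G.Adj a b then (2:ℝ)*y a^2 else 0))
              = ∑ a : V, 2 * y a ^2 * (G.degree a : ℝ) := by
                exact Finset.sum_congr rfl fun a _ => h1 a
            _ ≤ ∑ a : V, 2 * y a ^2 * (Fintype.card V : ℝ) := by
                apply Finset.sum_le_sum; intro a _
                have := hdeg a
                nlinarith [sq_nonneg (y a)]
            _ = 2 * (Fintype.card V : ℝ) * ∑ v : V, y v ^ 2 := by
                rw [Finset.mul_sum]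
                exact Finset.sum_congr rfl fun a _ => by ring
        have hB : (∑ a : V, ∑ b : V, (if G.Adj a b then (2:ℝ)*y b^2 else 0))
            ≤ 2 * (Fintype.card V : ℝ) * ∑ v : V, y v ^ 2 := by
          rw [Finset.sum_comm]
          have heq : ∀ b a : V, (if G.Adj a b then (2:ℝ)*y b^2 else 0)
              = (if G.Adj b a then (2:ℝ)*y b^2 else 0) := by
            intro b a
            exact if_congr (G.adj_comm a b) rfl rfl
          calc (∑ b : V, ∑ a : V, (if G.Adj a b then (2:ℝ)*y b^2 else 0))
              = ∑ b : V, ∑ a : V, (if G.Adj b a then (2:ℝ)*y b^2 else 0) := by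
                exact Finset.sum_congr rfl fun b _ =>
                  Finset.sum_congr rfl fun a _ => heq b a
            _ = ∑ b : V, 2 * y b ^2 * (G.degree b : ℝ) := by
                exact Finset.sum_congr rfl fun b _ => h1 b
            _ ≤ ∑ b : V, 2 * y b ^2 * (Fintype.card V : ℝ) := by
                apply Finset.sum_le_sum; intro b _
                have := hdeg b
                nlinarith [sq_nonneg (y b)]
            _ = 2 * (Fintype.card V : ℝ) * ∑ v : V, y v ^ 2 := by
                rw [Finset.mul_sum]
                exact Finset.sum_congr rfl fun b _ => by ring
        linarith

lemma quad_le {G : SimpleGraph V} [DecidableRel G.Adj] (F : Finset V) (x : F → ℝ) :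
    x ⬝ᵥ ((G.lapMatrix ℝ).submatrix (fun i : F => (i : V)) (fun i : F => (i : V)) *ᵥ x)
      ≤ 2 * (Fintype.card V : ℝ) * ∑ a : F, x a ^ 2 := by
  rw [quad_eq, quad_DS]
  have h1 := DS_le G (fun v => if h : v ∈ F then x ⟨v, h⟩ else 0)
  have h2 : ∑ v : V, (if h : v ∈ F then x ⟨v, h⟩ else 0) ^ 2 = ∑ a : F, x a ^ 2 := by
    rw [sum_ext F _ (fun v hv => by simp only [dif_neg hv]; ring)]
    exact Finset.sum_congr rfl fun a _ => by simp only [dif_pos a.2]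
  rw [h2] at h1
  linarith

lemma key_lb {G : SimpleGraph V} [DecidableRel G.Adj] (hconn : G.Connected) {F : Finset V}
    {s : V} (hs : s ∉ F) (x : F → ℝ) (i : F) :
    (x i)^2 ≤ 2 * (Fintype.card V : ℝ) *
      (x ⬝ᵥ ((G.lapMatrix ℝ).submatrix (fun i : F => (i : V)) (fun i : F => (i : V)) *ᵥ x)) := by
  set xb : V → ℝ := fun v => if h : v ∈ F then x ⟨v, h⟩ else 0 with hxb
  have hQ : x ⬝ᵥ ((G.lapMatrix ℝ).submatrix (fun i : F => (i : V)) (fun i : F => (i : V)) *ᵥ x)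
      = (∑ a : V, ∑ b : V, if G.Adj a b then (xb a - xb b)^2 else 0) / 2 := by
    rw [quad_eq, quad_DS]
  obtain ⟨w0⟩ := hconn.preconnected ↑i s
  have hp := w0.bypass_isPath
  have htel := telescope xb w0.bypass
  have hdart := darts_sum_le_DS xb hp
  have hxbi : xb ↑i = x i := by simp only [hxb, dif_pos i.2]
  have hxbs : xb s = 0 := by simp only [hxb, dif_neg hs]
  have hlen : (w0.bypass.length : ℝ) ≤ (Fintype.card V : ℝ) := by
    exact_mod_cast hp.length_lt.le
  have hds0 : 0 ≤ (w0.bypass.darts.map (fun d => (xb d.toProd.1 - xb d.toProd.2)^2)).sum := by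
    apply List.sum_nonneg
    intro r hr
    simp only [List.mem_map] at hr
    obtain ⟨d, _, rfl⟩ := hr
    positivity
  have hmul : (w0.bypass.length : ℝ) *
        (w0.bypass.darts.map (fun d => (xb d.toProd.1 - xb d.toProd.2)^2)).sum
      ≤ (Fintype.card V : ℝ) *
        (∑ a : V, ∑ b : V, if G.Adj a b then (xb a - xb b)^2 else 0) := by
    apply mul_le_mul hlen hdart hds0 (by positivity)
  rw [hxbi, hxbs] at htel
  rw [hQ]
  calc (x i)^2 = (x i - 0)^2 := by ring
    _ ≤ _ := htel
    _ ≤ _ := hmul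
    _ = 2 * (Fintype.card V : ℝ) *
        ((∑ a : V, ∑ b : V, if G.Adj a b then (xb a - xb b)^2 else 0) / 2) := by ring

end Helpers

set_option maxHeartbeats 1000000 in
/-- Under the grounded Laplacian setup with `n ≥ 2`, given `0 < ε < 1/2`, a positive
integer `t`, and `0 < δ < (ε/(72n²))·√(6(1−ε/12)/((1+ε/12)(n²−1)))`, let `X, Y` be real
matrices with columns indexed by `F` such that `‖X eᵢ‖² + ‖Y eᵢ‖² = eᵢᵀ L_F⁻¹ eᵢ` for every
`i ∈ F`, and let `X', Y', X̃, Ỹ` be real `t × |F|` matrices satisfying the column-norm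
approximation conditions (i) and the row-wise `L_F`-norm conditions (ii).  Then for every
`i ∈ F`: `(1 − ε/3)·eᵢᵀ L_F⁻¹ eᵢ ≤ ‖X̃ eᵢ‖² + ‖Ỹ eᵢ‖² ≤ (1 + ε/3)·eᵢᵀ L_F⁻¹ eᵢ`. -/
theorem stmt13 {V : Type} [Fintype V] [DecidableEq V]
    (G : SimpleGraph V) [DecidableRel G.Adj] (hconn : G.Connected)
    (F S0 S1 : Finset V)
    (hFne : F.Nonempty) (hS1ne : S1.Nonempty)
    (hFS0 : Disjoint F S0) (hFS1 : Disjoint F S1) (hS0S1 : Disjoint S0 S1)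
    (hcover : F ∪ S0 ∪ S1 = Finset.univ)
    (n : ℕ) (hn : n = Fintype.card V) (hn2 : 2 ≤ n)
    (LF : Matrix F F ℝ)
    (hLF : LF = (G.lapMatrix ℝ).submatrix (fun i : F => (i : V)) (fun i : F => (i : V)))
    (hPD : LF.PosDef)
    (ε : ℝ) (hε0 : 0 < ε) (hε : ε < 1 / 2)
    (t : ℕ) (ht : 0 < t)
    (δ : ℝ) (hδ0 : 0 < δ)
    (hδ : δ < ε / (72 * (n : ℝ) ^ 2)
        * Real.sqrt (6 * (1 - ε / 12) / ((1 + ε / 12) * ((n : ℝ) ^ 2 - 1))))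
    {p q : ℕ}
    (X : Matrix (Fin p) F ℝ) (Y : Matrix (Fin q) F ℝ)
    (hXY : ∀ i : F, (∑ a, X a i ^ 2) + (∑ a, Y a i ^ 2)
        = Pi.single i 1 ⬝ᵥ (LF⁻¹ *ᵥ Pi.single i 1))
    (X' Y' Xt Yt : Matrix (Fin t) F ℝ)
    (hX'lo : ∀ i : F, (1 - ε / 12) * ∑ a, X a i ^ 2 ≤ ∑ a, X' a i ^ 2)
    (hX'hi : ∀ i : F, ∑ a, X' a i ^ 2 ≤ (1 + ε / 12) * ∑ a, X a i ^ 2)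
    (hY'lo : ∀ i : F, (1 - ε / 12) * ∑ a, Y a i ^ 2 ≤ ∑ a, Y' a i ^ 2)
    (hY'hi : ∀ i : F, ∑ a, Y' a i ^ 2 ≤ (1 + ε / 12) * ∑ a, Y a i ^ 2)
    (hXrow : ∀ j : Fin t,
        Real.sqrt ((X' j - Xt j) ⬝ᵥ (LF *ᵥ (X' j - Xt j)))
          ≤ δ * Real.sqrt (X' j ⬝ᵥ (LF *ᵥ X' j)))
    (hYrow : ∀ j : Fin t,
        Real.sqrt ((Y' j - Yt j) ⬝ᵥ (LF *ᵥ (Y' j - Yt j)))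
          ≤ δ * Real.sqrt (Y' j ⬝ᵥ (LF *ᵥ Y' j))) :
    ∀ i : F,
      (1 - ε / 3) * (Pi.single i 1 ⬝ᵥ (LF⁻¹ *ᵥ Pi.single i 1))
          ≤ (∑ a, Xt a i ^ 2) + (∑ a, Yt a i ^ 2) ∧
      (∑ a, Xt a i ^ 2) + (∑ a, Yt a i ^ 2)
          ≤ (1 + ε / 3) * (Pi.single i 1 ⬝ᵥ (LF⁻¹ *ᵥ Pi.single i 1)) := by
  obtain ⟨s, hsS1⟩ := hS1ne
  have hsF : s ∉ F := fun h => (Finset.disjoint_left.mp hFS1) h hsS1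
  set N : ℝ := (n : ℝ) with hN
  have hN2 : (2:ℝ) ≤ N := by rw [hN]; exact_mod_cast hn2
  have hN0 : (0:ℝ) < N := by linarith
  -- basic matrix facts
  have hdet : IsUnit LF.det := isUnit_iff_ne_zero.mpr (ne_of_gt hPD.det_pos)
  have hInv : LF * LF⁻¹ = 1 := Matrix.mul_nonsing_inv _ hdet
  set w : F → F → ℝ := fun k => LF⁻¹ *ᵥ Pi.single k 1 with hw
  set R : F → ℝ := fun k => w k k with hR
  have hRdef : ∀ k : F, Pi.single k 1 ⬝ᵥ (LF⁻¹ *ᵥ Pi.single k 1) = R k := by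
    intro k
    rw [single_dotProduct, one_mul]
  have hLw : ∀ k : F, LF *ᵥ w k = Pi.single k 1 := by
    intro k
    rw [hw]
    simp only []
    rw [Matrix.mulVec_mulVec, hInv, Matrix.one_mulVec]
  have hQsym : ∀ u v : F → ℝ, u ⬝ᵥ (LF *ᵥ v) = v ⬝ᵥ (LF *ᵥ u) := sym_dot hPD.1
  have hQpos : ∀ y : F → ℝ, 0 ≤ y ⬝ᵥ (LF *ᵥ y) := by
    intro y
    have h := hPD.posSemidef.dotProduct_mulVec_nonneg y
    simpa using h
  have hQw : ∀ k : F, w k ⬝ᵥ (LF *ᵥ w k) = R k := by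
    intro k
    rw [hLw k, dotProduct_single, mul_one]
  have hR0 : ∀ k : F, 0 ≤ R k := fun k => (hQw k) ▸ hQpos (w k)
  have hkey : ∀ (x : F → ℝ) (k : F), (x k)^2 ≤ 2 * N * (x ⬝ᵥ (LF *ᵥ x)) := by
    intro x k
    have h := key_lb hconn hsF x k
    rw [← hLF] at h
    rw [hN, hn]
    exact h
  have hquadle : ∀ x : F → ℝ, x ⬝ᵥ (LF *ᵥ x) ≤ 2 * N * ∑ a : F, x a ^ 2 := by
    intro x
    have h := quad_le (G := G) F x
    rw [← hLF] at h
    rw [hN, hn]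
    exact h
  have hRle : ∀ k : F, R k ≤ 2 * N := by
    intro k
    have h1 := hkey (w k) k
    rw [hQw k] at h1
    have h2 : R k ^ 2 ≤ 2 * N * R k := h1
    nlinarith [hR0 k, hN2]
  -- column sums bounded
  have hXcol : ∀ k : F, (∑ a, X a k ^ 2) ≤ R k := by
    intro k
    have h := hXY k
    rw [hRdef k] at h
    have h2 : 0 ≤ ∑ a, Y a k ^ 2 := Finset.sum_nonneg fun a _ => sq_nonneg _
    linarith
  have hYcol : ∀ k : F, (∑ a, Y a k ^ 2) ≤ R k := by
    intro k
    have h := hXY k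
    rw [hRdef k] at h
    have h2 : 0 ≤ ∑ a, X a k ^ 2 := Finset.sum_nonneg fun a _ => sq_nonneg _
    linarith
  have hcardF : (Fintype.card F : ℝ) ≤ N := by
    rw [hN, hn]
    exact_mod_cast (by simpa [Fintype.card_coe] using F.card_le_univ)
  have hα0 : (0:ℝ) ≤ 1 + ε/12 := by linarith
  have hSXcol : (∑ k : F, ∑ a, X' a k ^ 2) ≤ (1 + ε/12) * (2*N*N) := by
    calc (∑ k : F, ∑ a, X' a k ^ 2) ≤ ∑ k : F, (1 + ε/12) * ∑ a, X a k ^ 2 :=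
          Finset.sum_le_sum fun k _ => hX'hi k
      _ = (1 + ε/12) * ∑ k : F, ∑ a, X a k ^ 2 := by rw [Finset.mul_sum]
      _ ≤ (1 + ε/12) * (2*N*N) := by
          apply mul_le_mul_of_nonneg_left _ hα0
          calc (∑ k : F, ∑ a, X a k ^ 2) ≤ ∑ k : F, (2*N) :=
                Finset.sum_le_sum fun k _ => (hXcol k).trans (hRle k)
            _ = (Fintype.card F : ℝ) * (2*N) := by
                rw [Finset.sum_const, Finset.card_univ, nsmul_eq_mul]
            _ ≤ N * (2*N) := by nlinarith [hcardF, hN0]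
            _ = 2*N*N := by ring
  have hSYcol : (∑ k : F, ∑ a, Y' a k ^ 2) ≤ (1 + ε/12) * (2*N*N) := by
    calc (∑ k : F, ∑ a, Y' a k ^ 2) ≤ ∑ k : F, (1 + ε/12) * ∑ a, Y a k ^ 2 :=
          Finset.sum_le_sum fun k _ => hY'hi k
      _ = (1 + ε/12) * ∑ k : F, ∑ a, Y a k ^ 2 := by rw [Finset.mul_sum]
      _ ≤ (1 + ε/12) * (2*N*N) := by
          apply mul_le_mul_of_nonneg_left _ hα0
          calc (∑ k : F, ∑ a, Y a k ^ 2) ≤ ∑ k : F, (2*N) :=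
                Finset.sum_le_sum fun k _ => (hYcol k).trans (hRle k)
            _ = (Fintype.card F : ℝ) * (2*N) := by
                rw [Finset.sum_const, Finset.card_univ, nsmul_eq_mul]
            _ ≤ N * (2*N) := by nlinarith [hcardF, hN0]
            _ = 2*N*N := by ring
  -- row bounds (de-sqrt)
  have hrowX : ∀ j : Fin t, (X' j - Xt j) ⬝ᵥ (LF *ᵥ (X' j - Xt j))
      ≤ δ^2 * (X' j ⬝ᵥ (LF *ᵥ X' j)) := by
    intro j
    have h1 := hXrow j
    have ha := hQpos (X' j - Xt j)
    have hb := hQpos (X' j)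
    have h2 := pow_le_pow_left₀ (Real.sqrt_nonneg _) h1 2
    rwa [Real.sq_sqrt ha, mul_pow, Real.sq_sqrt hb] at h2
  have hrowY : ∀ j : Fin t, (Y' j - Yt j) ⬝ᵥ (LF *ᵥ (Y' j - Yt j))
      ≤ δ^2 * (Y' j ⬝ᵥ (LF *ᵥ Y' j)) := by
    intro j
    have h1 := hYrow j
    have ha := hQpos (Y' j - Yt j)
    have hb := hQpos (Y' j)
    have h2 := pow_le_pow_left₀ (Real.sqrt_nonneg _) h1 2
    rwa [Real.sq_sqrt ha, mul_pow, Real.sq_sqrt hb] at h2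
  -- coefficient bound from hδ
  have hα1 : (0:ℝ) < 1 - ε/12 := by linarith
  have hα0' : (0:ℝ) < 1 + ε/12 := by linarith
  have hNP : (0:ℝ) < N^2 - 1 := by nlinarith
  have harg : (0:ℝ) ≤ 6*(1-ε/12)/((1+ε/12)*(N^2-1)) := by positivity
  have hcoef : δ^2 * (2*N) * ((1+ε/12)*(2*N*N)) ≤ ε^2/1296 := by
    have hδ2 : δ^2 < (ε/(72*N^2))^2 * (6*(1-ε/12)/((1+ε/12)*(N^2-1))) := by
      have h1 : δ*δ < (ε / (72 * N^2) * Real.sqrt (6*(1-ε/12)/((1+ε/12)*(N^2-1))))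
          * (ε / (72 * N^2) * Real.sqrt (6*(1-ε/12)/((1+ε/12)*(N^2-1)))) :=
        mul_self_lt_mul_self hδ0.le hδ
      calc δ^2 = δ*δ := sq δ
        _ < _ := h1
        _ = (ε/(72*N^2))^2 * (Real.sqrt (6*(1-ε/12)/((1+ε/12)*(N^2-1)))
              * Real.sqrt (6*(1-ε/12)/((1+ε/12)*(N^2-1)))) := by ring
        _ = (ε/(72*N^2))^2 * (6*(1-ε/12)/((1+ε/12)*(N^2-1))) := by
            rw [Real.mul_self_sqrt harg]
    have hq : (ε/(72*N^2))^2 * (6*(1-ε/12)/((1+ε/12)*(N^2-1)))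
        = ε^2 * (6*(1-ε/12)) / (5184*N^4*((1+ε/12)*(N^2-1))) := by
      rw [div_pow, div_mul_div_comm]
      congr 1 <;> ring
    rw [hq] at hδ2
    have hden : (0:ℝ) < 5184*N^4*((1+ε/12)*(N^2-1)) := by positivity
    have hkey2 : δ^2 * (5184*N^4*((1+ε/12)*(N^2-1))) < ε^2*(6*(1-ε/12)) :=
      (lt_div_iff₀ hden).mp hδ2
    have hNN : 0 ≤ N^3 - N - 6 := by
      nlinarith [mul_nonneg (sub_nonneg.mpr hN2) (by positivity : (0:ℝ) ≤ N^2+2*N+3)]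
    have h6N : 6*N^3 ≤ N^4*(N^2-1) := by
      nlinarith [mul_nonneg (by positivity : (0:ℝ) ≤ N^3) hNN]
    have hmono : δ^2 * (5184*(1+ε/12)*(6*N^3)) ≤ δ^2 * (5184*N^4*((1+ε/12)*(N^2-1))) := by
      apply mul_le_mul_of_nonneg_left _ (sq_nonneg δ)
      nlinarith [mul_nonneg hα0 (sub_nonneg.mpr h6N)]
    have hfin : δ^2*(1+ε/12)*N^3 * 31104 < 6*ε^2 := by
      nlinarith [hmono, hkey2, mul_nonneg (sq_nonneg ε) hε0.le]
    linarith [hfin]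
  -- per-column difference bound
  intro i
  have hdotw : ∀ d : F → ℝ, w i ⬝ᵥ (LF *ᵥ d) = d i := by
    intro d
    rw [hQsym, hLw i, dotProduct_single, mul_one]
  have hDXb : (∑ a, (Xt a i - X' a i) ^ 2)
      ≤ R i * (δ^2 * (2*N) * ((1+ε/12)*(2*N*N))) := by
    have hstep : ∀ a : Fin t, (Xt a i - X' a i) ^ 2
        ≤ R i * (δ^2 * (X' a ⬝ᵥ (LF *ᵥ X' a))) := by
      intro a
      have hcs := psd_cs hPD.posSemidef (w i) (X' a - Xt a)
      rw [hdotw (X' a - Xt a), hQw i] at hcs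
      have h1 : ((X' a - Xt a) i) ^ 2 ≤ R i * ((X' a - Xt a) ⬝ᵥ (LF *ᵥ (X' a - Xt a))) := hcs
      have h2 : R i * ((X' a - Xt a) ⬝ᵥ (LF *ᵥ (X' a - Xt a)))
          ≤ R i * (δ^2 * (X' a ⬝ᵥ (LF *ᵥ X' a))) :=
        mul_le_mul_of_nonneg_left (hrowX a) (hR0 i)
      have h3 : (Xt a i - X' a i) ^ 2 = ((X' a - Xt a) i) ^ 2 := by
        simp only [Pi.sub_apply]
        ring
      rw [h3]
      exact h1.trans h2
    calc (∑ a, (Xt a i - X' a i) ^ 2)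
        ≤ ∑ a, R i * (δ^2 * (X' a ⬝ᵥ (LF *ᵥ X' a))) := Finset.sum_le_sum fun a _ => hstep a
      _ = R i * δ^2 * ∑ a, (X' a ⬝ᵥ (LF *ᵥ X' a)) := by
          rw [Finset.mul_sum]
          exact Finset.sum_congr rfl fun a _ => by ring
      _ ≤ R i * δ^2 * ∑ a, (2 * N * ∑ k : F, X' a k ^ 2) := by
          apply mul_le_mul_of_nonneg_left _ (mul_nonneg (hR0 i) (sq_nonneg δ))
          exact Finset.sum_le_sum fun a _ => hquadle (X' a)
      _ = R i * δ^2 * (2 * N * ∑ k : F, ∑ a, X' a k ^ 2) := by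
          rw [← Finset.mul_sum, Finset.sum_comm]
      _ ≤ R i * δ^2 * (2 * N * ((1 + ε/12) * (2*N*N))) := by
          apply mul_le_mul_of_nonneg_left _ (mul_nonneg (hR0 i) (sq_nonneg δ))
          apply mul_le_mul_of_nonneg_left hSXcol (by linarith)
      _ = R i * (δ^2 * (2*N) * ((1+ε/12)*(2*N*N))) := by ring
  have hDYb : (∑ a, (Yt a i - Y' a i) ^ 2)
      ≤ R i * (δ^2 * (2*N) * ((1+ε/12)*(2*N*N))) := by
    have hstep : ∀ a : Fin t, (Yt a i - Y' a i) ^ 2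
        ≤ R i * (δ^2 * (Y' a ⬝ᵥ (LF *ᵥ Y' a))) := by
      intro a
      have hcs := psd_cs hPD.posSemidef (w i) (Y' a - Yt a)
      rw [hdotw (Y' a - Yt a), hQw i] at hcs
      have h1 : ((Y' a - Yt a) i) ^ 2 ≤ R i * ((Y' a - Yt a) ⬝ᵥ (LF *ᵥ (Y' a - Yt a))) := hcs
      have h2 : R i * ((Y' a - Yt a) ⬝ᵥ (LF *ᵥ (Y' a - Yt a)))
          ≤ R i * (δ^2 * (Y' a ⬝ᵥ (LF *ᵥ Y' a))) :=
        mul_le_mul_of_nonneg_left (hrowY a) (hR0 i)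
      have h3 : (Yt a i - Y' a i) ^ 2 = ((Y' a - Yt a) i) ^ 2 := by
        simp only [Pi.sub_apply]
        ring
      rw [h3]
      exact h1.trans h2
    calc (∑ a, (Yt a i - Y' a i) ^ 2)
        ≤ ∑ a, R i * (δ^2 * (Y' a ⬝ᵥ (LF *ᵥ Y' a))) := Finset.sum_le_sum fun a _ => hstep a
      _ = R i * δ^2 * ∑ a, (Y' a ⬝ᵥ (LF *ᵥ Y' a)) := by
          rw [Finset.mul_sum]
          exact Finset.sum_congr rfl fun a _ => by ring
      _ ≤ R i * δ^2 * ∑ a, (2 * N * ∑ k : F, Y' a k ^ 2) := by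
          apply mul_le_mul_of_nonneg_left _ (mul_nonneg (hR0 i) (sq_nonneg δ))
          exact Finset.sum_le_sum fun a _ => hquadle (Y' a)
      _ = R i * δ^2 * (2 * N * ∑ k : F, ∑ a, Y' a k ^ 2) := by
          rw [← Finset.mul_sum, Finset.sum_comm]
      _ ≤ R i * δ^2 * (2 * N * ((1 + ε/12) * (2*N*N))) := by
          apply mul_le_mul_of_nonneg_left _ (mul_nonneg (hR0 i) (sq_nonneg δ))
          apply mul_le_mul_of_nonneg_left hSYcol (by linarith)
      _ = R i * (δ^2 * (2*N) * ((1+ε/12)*(2*N*N))) := by ring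
  have hDX : (∑ a, (Xt a i - X' a i) ^ 2) ≤ ε^2/1296 * R i :=
    hDXb.trans (by nlinarith [hR0 i, hcoef])
  have hDY : (∑ a, (Yt a i - Y' a i) ^ 2) ≤ ε^2/1296 * R i :=
    hDYb.trans (by nlinarith [hR0 i, hcoef])
  -- final assembly
  set PX : ℝ := ∑ a, X' a i ^ 2 with hPX
  set PY : ℝ := ∑ a, Y' a i ^ 2 with hPY
  set DX : ℝ := ∑ a, (Xt a i - X' a i) ^ 2 with hDXdef
  set DY : ℝ := ∑ a, (Yt a i - Y' a i) ^ 2 with hDYdef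
  set CX : ℝ := ∑ a, X' a i * (Xt a i - X' a i) with hCXdef
  set CY : ℝ := ∑ a, Y' a i * (Yt a i - Y' a i) with hCYdef
  have hexpX : (∑ a, Xt a i ^ 2) = PX + 2*CX + DX := by
    rw [hPX, hCXdef, hDXdef, Finset.mul_sum, ← Finset.sum_add_distrib, ← Finset.sum_add_distrib]
    exact Finset.sum_congr rfl fun a _ => by ring
  have hexpY : (∑ a, Yt a i ^ 2) = PY + 2*CY + DY := by
    rw [hPY, hCYdef, hDYdef, Finset.mul_sum, ← Finset.sum_add_distrib, ← Finset.sum_add_distrib]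
    exact Finset.sum_congr rfl fun a _ => by ring
  have hτ : (0:ℝ) < ε/24 := by linarith
  have hCXub : 2*CX ≤ (ε/24)*PX + DX/(ε/24) := by
    rw [hCXdef, hPX, hDXdef, Finset.mul_sum, Finset.mul_sum, Finset.sum_div,
      ← Finset.sum_add_distrib]
    exact Finset.sum_le_sum fun a _ => amgm (ε/24) _ _ hτ
  have hCXlb : -(2*CX) ≤ (ε/24)*PX + DX/(ε/24) := by
    rw [hCXdef, hPX, hDXdef, Finset.mul_sum, Finset.mul_sum, Finset.sum_div,
      ← Finset.sum_add_distrib, ← Finset.sum_neg_distrib]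
    apply Finset.sum_le_sum
    intro a _
    have h := amgm (ε/24) (-(X' a i)) (Xt a i - X' a i) hτ
    calc -(2 * (X' a i * (Xt a i - X' a i))) = 2 * (-(X' a i) * (Xt a i - X' a i)) := by ring
      _ ≤ (ε/24) * (-(X' a i))^2 + (Xt a i - X' a i)^2/(ε/24) := h
      _ = (ε/24) * (X' a i)^2 + (Xt a i - X' a i)^2/(ε/24) := by ring
  have hCYub : 2*CY ≤ (ε/24)*PY + DY/(ε/24) := by
    rw [hCYdef, hPY, hDYdef, Finset.mul_sum, Finset.mul_sum, Finset.sum_div,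
      ← Finset.sum_add_distrib]
    exact Finset.sum_le_sum fun a _ => amgm (ε/24) _ _ hτ
  have hCYlb : -(2*CY) ≤ (ε/24)*PY + DY/(ε/24) := by
    rw [hCYdef, hPY, hDYdef, Finset.mul_sum, Finset.mul_sum, Finset.sum_div,
      ← Finset.sum_add_distrib, ← Finset.sum_neg_distrib]
    apply Finset.sum_le_sum
    intro a _
    have h := amgm (ε/24) (-(Y' a i)) (Yt a i - Y' a i) hτ
    calc -(2 * (Y' a i * (Yt a i - Y' a i))) = 2 * (-(Y' a i) * (Yt a i - Y' a i)) := by ring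
      _ ≤ (ε/24) * (-(Y' a i))^2 + (Yt a i - Y' a i)^2/(ε/24) := h
      _ = (ε/24) * (Y' a i)^2 + (Yt a i - Y' a i)^2/(ε/24) := by ring
  -- bounds on PX+PY
  have hXYi := hXY i
  rw [hRdef i] at hXYi
  have hPhi : PX + PY ≤ (1 + ε/12) * R i := by
    have h1 := hX'hi i
    have h2 := hY'hi i
    have hdist : (1+ε/12)*(∑ a, X a i ^ 2) + (1+ε/12)*(∑ a, Y a i ^ 2)
        = (1+ε/12)*((∑ a, X a i ^ 2) + (∑ a, Y a i ^ 2)) := by ring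
    rw [hXYi] at hdist
    rw [hPX, hPY]
    linarith
  have hPlo : (1 - ε/12) * R i ≤ PX + PY := by
    have h1 := hX'lo i
    have h2 := hY'lo i
    have hdist : (1-ε/12)*(∑ a, X a i ^ 2) + (1-ε/12)*(∑ a, Y a i ^ 2)
        = (1-ε/12)*((∑ a, X a i ^ 2) + (∑ a, Y a i ^ 2)) := by ring
    rw [hXYi] at hdist
    rw [hPX, hPY]
    linarith
  have hDX0 : 0 ≤ DX := Finset.sum_nonneg fun a _ => sq_nonneg _
  have hDY0 : 0 ≤ DY := Finset.sum_nonneg fun a _ => sq_nonneg _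
  -- translate division bounds
  have hDdivX : DX/(ε/24) ≤ ε/54 * R i := by
    have h1 : DX/(ε/24) ≤ (ε^2/1296 * R i)/(ε/24) := by
      exact (div_le_div_iff_of_pos_right hτ).mpr hDX
    have h2 : (ε^2/1296 * R i)/(ε/24) = ε/54 * R i := by
      field_simp
      ring
    linarith [h2 ▸ h1]
  have hDdivY : DY/(ε/24) ≤ ε/54 * R i := by
    have h1 : DY/(ε/24) ≤ (ε^2/1296 * R i)/(ε/24) := by
      exact (div_le_div_iff_of_pos_right hτ).mpr hDY
    have h2 : (ε^2/1296 * R i)/(ε/24) = ε/54 * R i := by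
      field_simp
      ring
    linarith [h2 ▸ h1]
  have hPmul : (ε/24)*PX + (ε/24)*PY ≤ ε/24 * R i + ε*(ε*R i)/288 := by
    have h1 : (ε/24)*(PX + PY) ≤ (ε/24)*((1 + ε/12) * R i) :=
      mul_le_mul_of_nonneg_left hPhi (by linarith)
    have h2 : (ε/24)*((1 + ε/12) * R i) = ε/24 * R i + ε*(ε*R i)/288 := by ring
    linarith [h2 ▸ h1]
  have hq2 : ε*(ε*R i) ≤ (1/2)*(ε*R i) := by
    apply mul_le_mul_of_nonneg_right hε.le (mul_nonneg hε0.le (hR0 i))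
  have hεR0 : 0 ≤ ε * R i := mul_nonneg hε0.le (hR0 i)
  have hDX2 : DX ≤ ε*(ε*R i)/1296 := by
    have : ε^2/1296 * R i = ε*(ε*R i)/1296 := by ring
    linarith [this ▸ hDX]
  have hDY2 : DY ≤ ε*(ε*R i)/1296 := by
    have : ε^2/1296 * R i = ε*(ε*R i)/1296 := by ring
    linarith [this ▸ hDY]
  have hglo : (1 - ε/3) * R i = R i - ε*R i/3 := by ring
  have hghi : (1 + ε/3) * R i = R i + ε*R i/3 := by ring
  have hplo : (1 - ε/12) * R i = R i - ε*R i/12 := by ring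
  have hphi : (1 + ε/12) * R i = R i + ε*R i/12 := by ring
  rw [hRdef i]
  constructor
  · linarith
  · linarith
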